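/- The Kravatz diagonal is a chain map: Δ_2 ∘ ∂ = (∂ ⊗ 1 + 1 ⊗ ∂) ∘ Δ_2 as maps C → C ⊗ C, where (1 ⊗ ∂) is evaluated with the Koszul sign convention; i.e. ∂ is a coderivation of Δ_2 and the A∞-coalgebra relation holds in arity 2. -/

import Mathlib

noncomputable section

/-- Cells of an `n`-gon: `v i` models the vertex `v_{i+1}`, `e i` models the edge `e_{i+1}`
(so indices are 0-based), and `F` models the 2-cell `P`. -/
inductive Cell (n : ℕ) : Type where
  | v : Fin n → Cell n
  | e : Fin n → Cell n
  | F : Cell n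
deriving DecidableEq

/-- `Tens R n k` models `C^{⊗ k}`, the free `R`-module on `k`-tuples of cells. -/
abbrev Tens (R : Type) [CommRing R] (n k : ℕ) : Type := (Fin k → Cell n) →₀ R

/-- The basis tensor corresponding to a tuple of cells. -/
def bt (R : Type) [CommRing R] {n k : ℕ} (x : Fin k → Cell n) : Tens R n k :=
  Finsupp.single x 1

/-- Degree of a cell. -/
def degC {n : ℕ} : Cell n → ℕ
  | .v _ => 0
  | .e _ => 1
  | .F => 2

/-- `(-1)^m` in `R`. -/
def sgn (R : Type) [CommRing R] (m : ℤ) : R := if Even m then 1 else -1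

/-- The boundary operator on basis cells: `∂(v_i) = 0`, `∂(e_i) = v_{i+1} - v_i` for `i < n`,
`∂(e_n) = v_n - v_1`, `∂(P) = e_1 + ⋯ + e_{n-1} - e_n`. -/
def dB (R : Type) [CommRing R] (n : ℕ) : Cell n → Tens R n 1
  | .v _ => 0
  | .e i =>
      if h : (i : ℕ) + 1 < n then
        bt R (fun _ => Cell.v ⟨(i : ℕ) + 1, h⟩) - bt R (fun _ => Cell.v i)
      else
        bt R (fun _ => Cell.v i) - bt R (fun _ => Cell.v ⟨0, i.pos⟩)
  | .F => ∑ i : Fin n, (if (i : ℕ) + 1 < n then (1 : R) else -1) • bt R (fun _ => Cell.e i)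

/-- `Σ_{0<i_1<⋯<i_k<n} e_{i_1} ⊗ ⋯ ⊗ e_{i_k}` (with 0-based indices: strictly increasing
tuples of edge indices all `< n-1`). -/
def esum (R : Type) [CommRing R] (n k : ℕ) : Tens R n k :=
  ∑ f : Fin k → Fin n,
    if (∀ p q : Fin k, p < q → f p < f q) ∧ (∀ p : Fin k, ((f p) : ℕ) + 1 < n) then
      bt R (fun p => Cell.e (f p))
    else 0

/-- The `A_∞`-coalgebra operations on basis cells: `DeltaB R n 2` is the Kravatz diagonal
`Δ₂` and for `k ≥ 3`, `DeltaB R n k` is `Δ_k`, which vanishes on vertices and edges and sends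
`P` to `Σ_{0<i_1<⋯<i_k<n} e_{i_1} ⊗ ⋯ ⊗ e_{i_k}`. -/
def DeltaB (R : Type) [CommRing R] (n : ℕ) (k : ℕ) : Cell n → Tens R n k
  | .v i => if k = 2 then bt R (fun _ => Cell.v i) else 0
  | .e i =>
      if k = 2 then
        if h : (i : ℕ) + 1 < n then
          bt R (fun p => if (p : ℕ) = 0 then Cell.v i else Cell.e i) +
            bt R (fun p => if (p : ℕ) = 0 then Cell.e i else Cell.v ⟨(i : ℕ) + 1, h⟩)
        else
          bt R (fun p => if (p : ℕ) = 0 then Cell.v ⟨0, i.pos⟩ else Cell.e i) +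
            bt R (fun p => if (p : ℕ) = 0 then Cell.e i else Cell.v i)
      else 0
  | .F =>
      esum R n k +
        (if h : k = 2 ∧ 0 < n then
          bt R (fun p => if (p : ℕ) = 0 then Cell.v ⟨0, h.2⟩ else Cell.F) +
            bt R (fun p => if (p : ℕ) = 0 then Cell.F
                  else Cell.v ⟨n - 1, Nat.sub_lt h.2 Nat.one_pos⟩)
        else 0)

/-- Extension of a map defined on basis tensors to a linear map. -/
def lext (R : Type) [CommRing R] (n : ℕ) {k m : ℕ} (φ : (Fin k → Cell n) → Tens R n m) :
    Tens R n k →ₗ[R] Tens R n m :=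
  Finsupp.linearCombination R φ

/-- Splicing a `j`-tuple into a `k`-tuple at position `a`, producing an `m`-tuple
(meaningful when `m = k + j - 1` and `a < k`). -/
def splice {n k j : ℕ} (m a : ℕ) (x : Fin k → Cell n) (y : Fin j → Cell n) :
    Fin m → Cell n := fun q =>
  if h1 : (q : ℕ) < a ∧ (q : ℕ) < k then x ⟨q, h1.2⟩
  else if h2 : a ≤ (q : ℕ) ∧ (q : ℕ) - a < j then y ⟨(q : ℕ) - a, h2.2⟩
  else if h3 : (q : ℕ) + 1 - j < k then x ⟨(q : ℕ) + 1 - j, h3⟩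
  else Cell.F

/-- `opp R n k m j a p g` is the linear map `1^{⊗a} ⊗ g ⊗ 1^{⊗(k-1-a)} : C^{⊗k} → C^{⊗m}`
(meaningful when `m = k + j - 1`), where `g` is the basis-level description of an operation
`C → C^{⊗j}` of degree `p`, evaluated with the Koszul sign convention. -/
def opp (R : Type) [CommRing R] (n : ℕ) (k m j a : ℕ) (p : ℤ) (g : Cell n → Tens R n j) :
    Tens R n k →ₗ[R] Tens R n m :=
  lext R n fun x =>
    if ha : a < k then
      sgn R (p * ∑ q : Fin k, if (q : ℕ) < a then (degC (x q) : ℤ) else 0) •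
        Finsupp.mapDomain (splice m a x) (g (x ⟨a, ha⟩))
    else 0

/-- `Δ_k` as a linear map `C → C^{⊗k}`. -/
def Dmap (R : Type) [CommRing R] (n k : ℕ) : Tens R n 1 →ₗ[R] Tens R n k :=
  lext R n fun x => DeltaB R n k (x 0)

/-- The boundary `∂` as a linear map `C → C`. -/
def bdry (R : Type) [CommRing R] (n : ℕ) : Tens R n 1 →ₗ[R] Tens R n 1 :=
  lext R n fun x => dB R n (x 0)

/-- The top cell `P` as a chain. -/
def cellP (R : Type) [CommRing R] (n : ℕ) : Tens R n 1 := bt R (fun _ => Cell.F)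

end


noncomputable section KHelp
namespace KHelp
open Finsupp

variable {R : Type} [CommRing R] {n : ℕ}

/-- pair function -/
def pr {n : ℕ} (c d : Cell n) : Fin 2 → Cell n := fun p => if (p : ℕ) = 0 then c else d

lemma pr_eta (g : Fin 2 → Cell n) : pr (g 0) (g 1) = g := by
  funext p; fin_cases p <;> simp [pr]

def S (R : Type) [CommRing R] {n : ℕ} (c d : Cell n) : Tens R n 2 := bt R (pr c d)

lemma lext_bt {k m : ℕ} (φ : (Fin k → Cell n) → Tens R n m) (x : Fin k → Cell n) :
    lext R n φ (bt R x) = φ x := by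
  simp [lext, bt]

lemma mapDomain_eq_lext {k m : ℕ} (σ : (Fin k → Cell n) → (Fin m → Cell n)) (t : Tens R n k) :
    Finsupp.mapDomain σ t = lext R n (fun y => bt R (σ y)) t := by
  simp [Finsupp.mapDomain, lext, Finsupp.linearCombination_apply, bt]

lemma splice0 (c d : Cell n) (y : Fin 1 → Cell n) :
    splice 2 0 (pr c d) y = pr (y 0) d := by
  funext p; fin_cases p <;> simp [splice, pr]

lemma splice1 (c d : Cell n) (y : Fin 1 → Cell n) :
    splice 2 1 (pr c d) y = pr c (y 0) := by
  funext p; fin_cases p <;> simp [splice, pr]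

lemma opp0_S (c d : Cell n) :
    opp R n 2 2 1 0 (-1) (dB R n) (S R c d) =
      lext R n (fun y => S R (y 0) d) (dB R n c) := by
  rw [opp, S, lext_bt, dif_pos (by norm_num : (0:ℕ) < 2)]
  have hs : (∑ q : Fin 2, if (q : ℕ) < 0 then (degC ((pr c d) q) : ℤ) else 0) = 0 := by simp
  rw [hs, mapDomain_eq_lext]
  have hc : pr c d ⟨0, by norm_num⟩ = c := rfl
  rw [hc]
  simp only [mul_zero, sgn, Even.zero, if_true, one_smul]
  have h2 : (fun y : Fin 1 → Cell n => bt R (splice 2 0 (pr c d) y)) =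
      fun y => S R (y 0) d := funext fun y => by rw [splice0]; rfl
  rw [h2]

lemma opp1_S (c d : Cell n) :
    opp R n 2 2 1 1 (-1) (dB R n) (S R c d) =
      sgn R (-(degC c : ℤ)) • lext R n (fun y => S R c (y 0)) (dB R n d) := by
  rw [opp, S, lext_bt, dif_pos (by norm_num : (1:ℕ) < 2)]
  have hs : (∑ q : Fin 2, if (q : ℕ) < 1 then (degC ((pr c d) q) : ℤ) else 0)
      = (degC c : ℤ) := by
    rw [Fin.sum_univ_two]
    norm_num
    rfl
  rw [hs, mapDomain_eq_lext]
  have hc : pr c d ⟨1, by norm_num⟩ = d := rfl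
  rw [hc]
  have : (-1 : ℤ) * (degC c : ℤ) = -(degC c : ℤ) := by ring
  rw [this]
  have h2 : (fun y : Fin 1 → Cell n => bt R (splice 2 1 (pr c d) y)) =
      fun y => S R c (y 0) := funext fun y => by rw [splice1]; rfl
  rw [h2]

lemma Dmap_bt {k : ℕ} (x : Fin 1 → Cell n) : Dmap R n k (bt R x) = DeltaB R n k (x 0) :=
  lext_bt _ _

lemma bdry_bt (x : Fin 1 → Cell n) : bdry R n (bt R x) = dB R n (x 0) :=
  lext_bt _ _

lemma D2v (i : Fin n) : DeltaB R n 2 (Cell.v i) = S R (Cell.v i) (Cell.v i) := by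
  unfold DeltaB S pr
  simp only [if_true, eq_self_iff_true]
  congr 1
  funext p
  simp

lemma D2e (i : Fin n) (h : (i:ℕ)+1 < n) :
    DeltaB R n 2 (Cell.e i) =
      S R (Cell.v i) (Cell.e i) + S R (Cell.e i) (Cell.v ⟨(i:ℕ)+1, h⟩) := by
  unfold DeltaB S pr
  simp only [if_true, eq_self_iff_true, dif_pos h]

lemma D2e' (i : Fin n) (h : ¬ ((i:ℕ)+1 < n)) :
    DeltaB R n 2 (Cell.e i) =
      S R (Cell.v ⟨0, i.pos⟩) (Cell.e i) + S R (Cell.e i) (Cell.v i) := by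
  unfold DeltaB S pr
  simp only [if_true, eq_self_iff_true, dif_neg h]

lemma dBe (i : Fin n) (h : (i:ℕ)+1 < n) :
    dB R n (Cell.e i) =
      bt R (fun _ => Cell.v ⟨(i:ℕ)+1, h⟩) - bt R (fun _ => Cell.v i) := by
  simp [dB, h]

lemma dBe' (i : Fin n) (h : ¬ ((i:ℕ)+1 < n)) :
    dB R n (Cell.e i) =
      bt R (fun _ => Cell.v i) - bt R (fun _ => Cell.v ⟨0, i.pos⟩) := by
  simp [dB, h]

lemma sgn_zero : sgn R (-(0:ℤ)) = 1 := by simp [sgn]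
lemma sgn_one : sgn R (-(1:ℤ)) = -1 := by simp [sgn, Int.even_iff]
lemma sgn_two : sgn R (-(2:ℤ)) = 1 := by simp [sgn, Int.even_iff]

lemma sgn0 : sgn R 0 = 1 := by simp [sgn]
lemma sgn1 : sgn R (-1) = -1 := by simp [sgn, Int.even_iff]
lemma sgn2 : sgn R (-2) = 1 := by simp [sgn, Int.even_iff]

def Vn (n : ℕ) (h0 : 0 < n) (i : ℕ) : Cell n := Cell.v ⟨i % n, Nat.mod_lt _ h0⟩
def En (n : ℕ) (h0 : 0 < n) (i : ℕ) : Cell n := Cell.e ⟨i % n, Nat.mod_lt _ h0⟩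

lemma Vn_fin (h0 : 0 < n) (i : Fin n) : Cell.v i = Vn n h0 (i : ℕ) :=
  congrArg _ (Fin.ext (Nat.mod_eq_of_lt i.isLt)).symm

lemma En_fin (h0 : 0 < n) (i : Fin n) : Cell.e i = En n h0 (i : ℕ) :=
  congrArg _ (Fin.ext (Nat.mod_eq_of_lt i.isLt)).symm

lemma Vn_mk (h0 : 0 < n) {i : ℕ} (hi : i < n) : Vn n h0 i = Cell.v ⟨i, hi⟩ :=
  congrArg _ (Fin.ext (Nat.mod_eq_of_lt hi))

lemma En_mk (h0 : 0 < n) {i : ℕ} (hi : i < n) : En n h0 i = Cell.e ⟨i, hi⟩ :=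
  congrArg _ (Fin.ext (Nat.mod_eq_of_lt hi))

lemma dBF_range (h0 : 0 < n) :
    dB R n Cell.F = ∑ i ∈ Finset.range n,
      (if i + 1 < n then (1:R) else -1) • bt R (fun _ : Fin 1 => En n h0 i) := by
  simp only [dB]
  rw [← Fin.sum_univ_eq_sum_range
    (fun i => (if i + 1 < n then (1:R) else -1) • bt R (fun _ : Fin 1 => En n h0 i))]
  exact Finset.sum_congr rfl fun i _ => by rw [En_fin h0 i]

lemma dBEn (h0 : 0 < n) (i : ℕ) (hi : i < n) :
    dB R n (En n h0 i) =
      if i + 1 < n then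
        bt R (fun _ : Fin 1 => Vn n h0 (i+1)) - bt R (fun _ : Fin 1 => Vn n h0 i)
      else
        bt R (fun _ : Fin 1 => Vn n h0 i) - bt R (fun _ : Fin 1 => Vn n h0 0) := by
  rw [En_mk h0 hi]
  by_cases h : i + 1 < n
  · rw [if_pos h, dBe ⟨i, hi⟩ h, Vn_mk h0 h, Vn_mk h0 hi]
  · rw [if_neg h, dBe' ⟨i, hi⟩ h, Vn_mk h0 h0, Vn_mk h0 hi]

lemma D2En (h0 : 0 < n) (i : ℕ) (hi : i < n) :
    DeltaB R n 2 (En n h0 i) =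
      if i + 1 < n then
        S R (Vn n h0 i) (En n h0 i) + S R (En n h0 i) (Vn n h0 (i+1))
      else
        S R (Vn n h0 0) (En n h0 i) + S R (En n h0 i) (Vn n h0 i) := by
  rw [En_mk h0 hi]
  by_cases h : i + 1 < n
  · rw [if_pos h, D2e ⟨i, hi⟩ h, Vn_mk h0 h, Vn_mk h0 hi]
  · rw [if_neg h, D2e' ⟨i, hi⟩ h, Vn_mk h0 h0, Vn_mk h0 hi]

lemma D2F (h0 : 0 < n) : DeltaB R n 2 Cell.F
    = esum R n 2 + (S R (Vn n h0 0) Cell.F + S R Cell.F (Vn n h0 (n-1))) := by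
  rw [Vn_mk h0 h0, Vn_mk h0 (Nat.sub_lt h0 Nat.one_pos)]
  unfold DeltaB S pr
  rw [dif_pos (⟨rfl, h0⟩ : 2 = 2 ∧ 0 < n)]

lemma esum_eq (h0 : 0 < n) : esum R n 2 =
    ∑ i ∈ Finset.range n, ∑ j ∈ Finset.range n,
      if i < j ∧ i + 1 < n ∧ j + 1 < n then S R (En n h0 i) (En n h0 j) else 0 := by
  unfold esum
  rw [← Equiv.sum_comp (piFinTwoEquiv fun _ => Fin n).symm, Fintype.sum_prod_type]
  rw [← Fin.sum_univ_eq_sum_range (fun i => ∑ j ∈ Finset.range n,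
        if i < j ∧ i + 1 < n ∧ j + 1 < n then S R (En n h0 i) (En n h0 j) else 0)]
  refine Finset.sum_congr rfl fun a _ => ?_
  rw [← Fin.sum_univ_eq_sum_range (fun j =>
        if (a:ℕ) < j ∧ (a:ℕ) + 1 < n ∧ j + 1 < n
        then S R (En n h0 (a:ℕ)) (En n h0 j) else 0)]
  refine Finset.sum_congr rfl fun b _ => ?_
  have hf : (piFinTwoEquiv fun _ => Fin n).symm (a, b)
      = fun p : Fin 2 => if (p:ℕ) = 0 then a else b := by
    funext p; fin_cases p <;> simp [piFinTwoEquiv]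
  rw [hf]
  have hbt : bt R (fun p : Fin 2 => Cell.e (if (p:ℕ) = 0 then a else b))
      = S R (En n h0 (a:ℕ)) (En n h0 (b:ℕ)) := by
    unfold S pr
    congr 1
    funext p
    by_cases hp : (p:ℕ) = 0 <;> simp [hp, En_fin h0]
  by_cases hc : (a:ℕ) < (b:ℕ) ∧ (a:ℕ) + 1 < n ∧ (b:ℕ) + 1 < n
  · rw [if_pos hc, if_pos, hbt]
    refine ⟨?_, ?_⟩
    · intro p q hpq
      fin_cases p <;> fin_cases q <;> simp_all
    · intro p
      fin_cases p <;> simp <;> omega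
  · rw [if_neg hc, if_neg]
    intro ⟨h1, h2⟩
    exact hc ⟨by simpa using h1 0 1 (by norm_num), by simpa using h2 0, by simpa using h2 1⟩

lemma lext0_dBF (h0 : 0 < n) (d : Cell n) :
    lext R n (fun y : Fin 1 → Cell n => S R (y 0) d) (dB R n Cell.F)
      = ∑ i ∈ Finset.range n,
          (if i + 1 < n then S R (En n h0 i) d else -(S R (En n h0 i) d)) := by
  rw [dBF_range h0, map_sum]
  refine Finset.sum_congr rfl fun i _ => ?_
  rw [map_smul, lext_bt]
  split_ifs <;> simp

lemma lext1_dBF (h0 : 0 < n) (c : Cell n) :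
    lext R n (fun y : Fin 1 → Cell n => S R c (y 0)) (dB R n Cell.F)
      = ∑ i ∈ Finset.range n,
          (if i + 1 < n then S R c (En n h0 i) else -(S R c (En n h0 i))) := by
  rw [dBF_range h0, map_sum]
  refine Finset.sum_congr rfl fun i _ => ?_
  rw [map_smul, lext_bt]
  split_ifs <;> simp

lemma opp0_esum (h0 : 0 < n) :
    opp R n 2 2 1 0 (-1) (dB R n) (esum R n 2)
      = ∑ i ∈ Finset.range n, ∑ j ∈ Finset.range n,
          if i < j ∧ i + 1 < n ∧ j + 1 < n
          then S R (Vn n h0 (i+1)) (En n h0 j) - S R (Vn n h0 i) (En n h0 j) else 0 := by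
  rw [esum_eq h0, map_sum]
  refine Finset.sum_congr rfl fun i hi => ?_
  rw [map_sum]
  refine Finset.sum_congr rfl fun j hj => ?_
  by_cases hc : i < j ∧ i + 1 < n ∧ j + 1 < n
  · rw [if_pos hc, if_pos hc, opp0_S, dBEn h0 i (by omega), if_pos hc.2.1, map_sub,
      lext_bt, lext_bt]
  · rw [if_neg hc, if_neg hc, map_zero]

lemma opp1_esum (h0 : 0 < n) :
    opp R n 2 2 1 1 (-1) (dB R n) (esum R n 2)
      = ∑ i ∈ Finset.range n, ∑ j ∈ Finset.range n,
          if i < j ∧ i + 1 < n ∧ j + 1 < n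
          then S R (En n h0 i) (Vn n h0 j) - S R (En n h0 i) (Vn n h0 (j+1)) else 0 := by
  rw [esum_eq h0, map_sum]
  refine Finset.sum_congr rfl fun i hi => ?_
  rw [map_sum]
  refine Finset.sum_congr rfl fun j hj => ?_
  by_cases hc : i < j ∧ i + 1 < n ∧ j + 1 < n
  · rw [if_pos hc, if_pos hc, opp1_S, dBEn h0 j (by omega), if_pos hc.2.2, map_sub,
      lext_bt, lext_bt]
    have hd : degC (En n h0 i) = 1 := rfl
    rw [hd]
    push_cast
    rw [sgn1, neg_smul, one_smul]
    abel
  · rw [if_neg hc, if_neg hc, map_zero]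

section Comb
variable {M : Type} [AddCommGroup M]

lemma sum_ite_lt (g : ℕ → M) {j m : ℕ} (h : j ≤ m) :
    (∑ i ∈ Finset.range m, if i < j then g i else 0) = ∑ i ∈ Finset.range j, g i := by
  rw [← Finset.sum_filter]
  congr 1
  ext k
  simp only [Finset.mem_filter, Finset.mem_range]
  omega

lemma sum_ite_gt (g : ℕ → M) (i m : ℕ) :
    (∑ j ∈ Finset.range m, if i < j then g j else 0) = ∑ j ∈ Finset.Ico (i+1) m, g j := by
  rw [← Finset.sum_filter]
  congr 1
  ext k
  simp only [Finset.mem_filter, Finset.mem_range, Finset.mem_Ico]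
  omega

lemma tele_Ico (B : ℕ → M) {a c : ℕ} (h : a ≤ c) :
    (∑ j ∈ Finset.Ico a c, (B j - B (j+1))) = B a - B c := by
  rw [Finset.sum_Ico_eq_sum_range]
  have key := Finset.sum_range_sub (fun k => B (a + k)) (c - a)
  rw [Nat.add_sub_cancel' h] at key
  rw [Nat.add_zero] at key
  calc (∑ k ∈ Finset.range (c - a), (B (a + k) - B (a + k + 1)))
      = -∑ k ∈ Finset.range (c - a), (B (a + (k+1)) - B (a + k)) := by
        rw [← Finset.sum_neg_distrib]
        exact Finset.sum_congr rfl fun k _ => by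
          have : a + (k + 1) = a + k + 1 := by omega
          rw [this]; abel
    _ = -(B c - B a) := by rw [key]
    _ = B a - B c := by abel

lemma comb {n : ℕ} (hn : 3 ≤ n) (a b : ℕ → ℕ → M) :
    (∑ i ∈ Finset.range n, if i + 1 < n then a i i + b i (i+1) else -(a 0 i + b i i))
    = (∑ i ∈ Finset.range n, ∑ j ∈ Finset.range n,
          if i < j ∧ i + 1 < n ∧ j + 1 < n then a (i+1) j - a i j else 0)
      + (∑ i ∈ Finset.range n, if i + 1 < n then b i (n-1) else -(b i (n-1)))
      + (∑ i ∈ Finset.range n, ∑ j ∈ Finset.range n,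
          if i < j ∧ i + 1 < n ∧ j + 1 < n then b i j - b i (j+1) else 0)
      + (∑ i ∈ Finset.range n, if i + 1 < n then a 0 i else -(a 0 i)) := by
  obtain ⟨N, rfl⟩ : ∃ N, n = N + 1 := ⟨n - 1, by omega⟩
  have hN : 2 ≤ N := by omega
  have split1 : ∀ f g : ℕ → M,
      (∑ i ∈ Finset.range (N+1), if i + 1 < N + 1 then f i else g i)
        = (∑ i ∈ Finset.range N, f i) + g N := by
    intro f g
    rw [Finset.sum_range_succ, if_neg (by omega)]
    congr 1
    exact Finset.sum_congr rfl fun i hi =>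
      if_pos (by have := Finset.mem_range.mp hi; omega)
  have splitD : ∀ F : ℕ → ℕ → M,
      (∑ i ∈ Finset.range (N+1), ∑ j ∈ Finset.range (N+1),
          if i < j ∧ i + 1 < N + 1 ∧ j + 1 < N + 1 then F i j else 0)
        = ∑ i ∈ Finset.range N, ∑ j ∈ Finset.range N,
            if i < j then F i j else 0 := by
    intro F
    rw [Finset.sum_range_succ]
    have hlast : (∑ j ∈ Finset.range (N+1),
        if N < j ∧ N + 1 < N + 1 ∧ j + 1 < N + 1 then F N j else 0) = 0 :=
      Finset.sum_eq_zero fun j _ => if_neg (by omega)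
    rw [hlast, add_zero]
    refine Finset.sum_congr rfl fun i hi => ?_
    have hi' := Finset.mem_range.mp hi
    rw [Finset.sum_range_succ, if_neg (by omega), add_zero]
    refine Finset.sum_congr rfl fun j hj => ?_
    have hj' := Finset.mem_range.mp hj
    by_cases hij : i < j
    · rw [if_pos ⟨hij, by omega, by omega⟩, if_pos hij]
    · rw [if_neg (fun hh => hij hh.1), if_neg hij]
  rw [split1, split1, split1, splitD, splitD]
  simp only [Nat.add_sub_cancel]
  have T3 : (∑ i ∈ Finset.range N, ∑ j ∈ Finset.range N,
        if i < j then a (i+1) j - a i j else 0)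
      = ∑ j ∈ Finset.range N, (a j j - a 0 j) := by
    rw [Finset.sum_comm]
    refine Finset.sum_congr rfl fun j hj => ?_
    rw [sum_ite_lt (fun i => a (i+1) j - a i j) (le_of_lt (Finset.mem_range.mp hj))]
    exact Finset.sum_range_sub (fun i => a i j) j
  have T4 : (∑ i ∈ Finset.range N, ∑ j ∈ Finset.range N,
        if i < j then b i j - b i (j+1) else 0)
      = ∑ i ∈ Finset.range N, (b i (i+1) - b i N) := by
    refine Finset.sum_congr rfl fun i hi => ?_
    rw [sum_ite_gt (fun j => b i j - b i (j+1)) i N]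
    exact tele_Ico (fun j => b i j) (Finset.mem_range.mp hi)
  rw [T3, T4]
  simp only [Finset.sum_add_distrib, Finset.sum_sub_distrib]
  abel

end Comb

end KHelp
end KHelp
/-- The Kravatz diagonal is a chain map:
`Δ₂ ∘ ∂ = (∂ ⊗ 1 + 1 ⊗ ∂) ∘ Δ₂` as maps `C → C ⊗ C`, where `1 ⊗ ∂` is evaluated with the
Koszul sign convention; i.e. `∂` is a coderivation of `Δ₂` and the `A_∞`-coalgebra relation
holds in arity 2. -/
theorem kravatz_diagonal_chain_map (R : Type) [CommRing R] (n : ℕ) (hn : 3 ≤ n) :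
    (Dmap R n 2) ∘ₗ (bdry R n) =
      (opp R n 2 2 1 0 (-1) (dB R n) + opp R n 2 2 1 1 (-1) (dB R n)) ∘ₗ (Dmap R n 2) := by
  apply Finsupp.lhom_ext
  intro x r
  have hr : (Finsupp.single x r : Tens R n 1) = r • bt R x := by
    simp [bt, Finsupp.smul_single]
  rw [hr, map_smul, map_smul]
  congr 1
  have hx : x = fun _ : Fin 1 => x 0 := funext fun p => by rw [Subsingleton.elim p 0]
  rw [hx]
  generalize x 0 = c
  simp only [LinearMap.comp_apply, LinearMap.add_apply, KHelp.Dmap_bt, KHelp.bdry_bt]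
  cases c with
  | v i =>
    simp [dB, KHelp.D2v, KHelp.opp0_S, KHelp.opp1_S]
  | e i =>
    by_cases h : (i:ℕ)+1 < n
    · rw [KHelp.dBe i h, KHelp.D2e i h]
      simp only [map_sub, map_add, KHelp.Dmap_bt, KHelp.D2v, KHelp.opp0_S, KHelp.opp1_S,
        KHelp.lext_bt, KHelp.dBe i h, degC, Nat.cast_zero, Nat.cast_one, neg_zero,
        KHelp.sgn0, KHelp.sgn1, one_smul, neg_smul, smul_sub]
      simp only [show dB R n (Cell.v i) = 0 from rfl,
        show dB R n (Cell.v ⟨(i:ℕ)+1, h⟩) = 0 from rfl, map_zero, smul_zero]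
      abel
    · rw [KHelp.dBe' i h, KHelp.D2e' i h]
      simp only [map_sub, map_add, KHelp.Dmap_bt, KHelp.D2v, KHelp.opp0_S, KHelp.opp1_S,
        KHelp.lext_bt, KHelp.dBe' i h, degC, Nat.cast_zero, Nat.cast_one, neg_zero,
        KHelp.sgn0, KHelp.sgn1, one_smul, neg_smul, smul_sub]
      simp only [show dB R n (Cell.v i) = 0 from rfl,
        show dB R n (Cell.v ⟨0, i.pos⟩) = 0 from rfl, map_zero, smul_zero]
      abel
  | F =>
    have h0 : 0 < n := by omega
    have L : Dmap R n 2 (dB R n Cell.F)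
        = ∑ i ∈ Finset.range n, (if i + 1 < n then
            KHelp.S R (KHelp.Vn n h0 i) (KHelp.En n h0 i)
              + KHelp.S R (KHelp.En n h0 i) (KHelp.Vn n h0 (i+1))
          else -(KHelp.S R (KHelp.Vn n h0 0) (KHelp.En n h0 i)
              + KHelp.S R (KHelp.En n h0 i) (KHelp.Vn n h0 i))) := by
      rw [KHelp.dBF_range h0, map_sum]
      refine Finset.sum_congr rfl fun i hi => ?_
      rw [map_smul, KHelp.Dmap_bt]
      rw [KHelp.D2En h0 i (Finset.mem_range.mp hi)]
      split_ifs <;> simp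
      abel
    rw [L, KHelp.D2F h0, map_add, map_add, map_add, map_add,
      KHelp.opp0_esum h0, KHelp.opp1_esum h0]
    simp only [KHelp.opp0_S, KHelp.opp1_S]
    rw [KHelp.lext0_dBF h0, KHelp.lext1_dBF h0]
    simp only [show dB R n (KHelp.Vn n h0 0) = 0 from rfl,
      show dB R n (KHelp.Vn n h0 (n-1)) = 0 from rfl,
      show degC (KHelp.Vn n h0 0) = 0 from rfl,
      show degC (Cell.F : Cell n) = 2 from rfl,
      map_zero, smul_zero, Nat.cast_zero, neg_zero, Nat.cast_ofNat,
      KHelp.sgn0, KHelp.sgn2, one_smul, add_zero, zero_add]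
    have hcomb := KHelp.comb (M := Tens R n 2) hn
      (fun i j => KHelp.S R (KHelp.Vn n h0 i) (KHelp.En n h0 j))
      (fun i j => KHelp.S R (KHelp.En n h0 i) (KHelp.Vn n h0 j))
    rw [hcomb]
    abel
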